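/- Elliptical potential lemma: let x_1, …, x_T ∈ ℝ^d, let Λ_0 ∈ ℝ^{d×d} be symmetric positive definite, and set Λ_t = Λ_0 + Σ_{i=1}^{t} x_i x_i^⊤. Then (i) log( det(Λ_T)/det(Λ_0) ) ≤ Σ_{i=1}^{T} ‖x_i‖²_{Λ_{i-1}^{-1}}; and (ii) if additionally ‖x_i‖ ≤ L for all i, then Σ_{i=1}^{T} min{1, ‖x_i‖²_{Λ_{i-1}^{-1}}} ≤ 2·log( det(Λ_T)/det(Λ_0) ) ≤ 2d·log( (tr(Λ_0) + T·L²) / (d·det(Λ_0)^{1/d}) ). -/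

import Mathlib

open Finset Matrix

lemma epl_vecMulVec_posSemidef {d : ℕ} (v : Fin d → ℝ) : (vecMulVec v v).PosSemidef := by
  refine .of_dotProduct_mulVec_nonneg ?_ fun y => ?_
  · ext i j
    simp [vecMulVec_apply, conjTranspose_apply, mul_comm]
  · have h : (vecMulVec v v) *ᵥ y = (v ⬝ᵥ y) • v := by
      ext i
      simp only [mulVec, vecMulVec_apply, dotProduct, Pi.smul_apply, smul_eq_mul]
      rw [Finset.sum_mul]
      exact Finset.sum_congr rfl fun j _ => by ring
    rw [h]
    have h2 : star y ⬝ᵥ (v ⬝ᵥ y) • v = (v ⬝ᵥ y) * (v ⬝ᵥ y) := by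
      simp [dotProduct_smul, dotProduct_comm, smul_eq_mul]
    rw [h2]
    exact mul_self_nonneg _

lemma epl_min_le_two_log {a : ℝ} (ha : 0 ≤ a) : min 1 a ≤ 2 * Real.log (1 + a) := by
  rcases le_total 1 a with h | h
  · rw [min_eq_left h]
    have h2 : Real.log 2 ≤ Real.log (1 + a) :=
      Real.log_le_log (by norm_num) (by linarith)
    have := Real.log_two_gt_d9
    linarith
  · rw [min_eq_right h]
    have hpos : (0:ℝ) < 1 + a := by linarith
    have key : Real.log ((1+a)⁻¹) ≤ (1+a)⁻¹ - 1 :=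
      Real.log_le_sub_one_of_pos (by positivity)
    rw [Real.log_inv] at key
    have hinv : (1+a) * (1+a)⁻¹ = 1 := mul_inv_cancel₀ hpos.ne'
    nlinarith [key, hinv, sq_nonneg a]

lemma epl_trace_eq_sum_eigenvalues {d : ℕ} {A : Matrix (Fin d) (Fin d) ℝ}
    (hA : A.IsHermitian) : A.trace = ∑ i, hA.eigenvalues i := by
  rw [hA.trace_eq_sum_eigenvalues]
  simp

lemma epl_log_det_le {d : ℕ} (hd : 0 < d) {A : Matrix (Fin d) (Fin d) ℝ} (hA : A.PosDef) :
    Real.log A.det ≤ d * Real.log (A.trace / d) := by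
  have : Nonempty (Fin d) := Fin.pos_iff_nonempty.mp hd
  have hH := hA.isHermitian
  set lam := hH.eigenvalues with hlam
  have hlpos : ∀ i, 0 < lam i := hA.eigenvalues_pos
  have hdpos : (0:ℝ) < d := by positivity
  have hgm := Real.geom_mean_le_arith_mean_weighted Finset.univ (fun _ => 1/(d:ℝ)) lam
      (fun i _ => by positivity) (by rw [Finset.sum_const, Finset.card_univ, Fintype.card_fin, nsmul_eq_mul]; field_simp) (fun i _ => (hlpos i).le)
  have hprodpos : 0 < ∏ i, lam i ^ (1/(d:ℝ)) :=
    Finset.prod_pos fun i _ => Real.rpow_pos_of_pos (hlpos i) _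
  have h1 : Real.log (∏ i, lam i ^ (1/(d:ℝ))) ≤ Real.log (∑ i, (1/(d:ℝ)) * lam i) :=
    Real.log_le_log hprodpos hgm
  have h2 : Real.log (∏ i, lam i ^ (1/(d:ℝ))) = (1/(d:ℝ)) * ∑ i, Real.log (lam i) := by
    rw [Real.log_prod (fun i _ => (Real.rpow_pos_of_pos (hlpos i) _).ne')]
    simp_rw [Real.log_rpow (hlpos _)]
    rw [← Finset.mul_sum]
  have h3 : (∑ i, (1/(d:ℝ)) * lam i) = A.trace / d := by
    rw [← Finset.mul_sum, ← epl_trace_eq_sum_eigenvalues hH]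
    ring
  have h4 : Real.log A.det = ∑ i, Real.log (lam i) := by
    rw [hH.det_eq_prod_eigenvalues, Real.log_prod (fun i _ => by
      simpa using (hlpos i).ne')]
    simp [hlam]
  rw [h4]
  rw [h2, h3] at h1
  have := mul_le_mul_of_nonneg_left h1 hdpos.le
  calc ∑ i, Real.log (lam i) = (d:ℝ) * ((1/(d:ℝ)) * ∑ i, Real.log (lam i)) := by
        field_simp
    _ ≤ (d:ℝ) * Real.log (A.trace / d) := this

open Finset Matrix

theorem elliptical_potential_lemma
    {d : ℕ} (T : ℕ) (x : Fin T → Fin d → ℝ)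
    (Lam0 : Matrix (Fin d) (Fin d) ℝ) (hLam0 : Lam0.PosDef)
    (Lam : ℕ → Matrix (Fin d) (Fin d) ℝ)
    (hLam : ∀ t, Lam t = Lam0 +
      ∑ i ∈ Finset.univ.filter (fun i : Fin T => (i : ℕ) < t), vecMulVec (x i) (x i)) :
    Real.log ((Lam T).det / Lam0.det)
        ≤ ∑ i : Fin T, x i ⬝ᵥ (Lam (i : ℕ))⁻¹.mulVec (x i)
    ∧ ∀ L : ℝ, (∀ i, Real.sqrt (x i ⬝ᵥ x i) ≤ L) →
        (∑ i : Fin T, min 1 (x i ⬝ᵥ (Lam (i : ℕ))⁻¹.mulVec (x i))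
            ≤ 2 * Real.log ((Lam T).det / Lam0.det)
          ∧ 2 * Real.log ((Lam T).det / Lam0.det)
            ≤ 2 * d * Real.log ((Lam0.trace + T * L ^ 2) / (d * Lam0.det ^ ((1:ℝ) / d)))) := by
  set w : Fin T → ℝ := fun i => x i ⬝ᵥ (Lam (i : ℕ))⁻¹.mulVec (x i) with hw
  have hPos : ∀ t, (Lam t).PosDef := by
    intro t
    rw [hLam t]
    refine hLam0.add_posSemidef ?_
    refine Finset.sum_induction _ _ (fun a b ha hb => ha.add hb) Matrix.PosSemidef.zero ?_
    intro i _
    exact epl_vecMulVec_posSemidef (x i)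
  have hw0 : ∀ i, 0 ≤ w i := by
    intro i
    simpa using ((hPos i).inv.posSemidef).dotProduct_mulVec_nonneg (x i)
  have hins : ∀ t (ht : t < T),
      Finset.univ.filter (fun i : Fin T => (i : ℕ) < t + 1)
        = insert ⟨t, ht⟩ (Finset.univ.filter (fun i : Fin T => (i : ℕ) < t)) := by
    intro t ht
    ext i
    simp [Nat.lt_succ_iff_lt_or_eq, Fin.ext_iff, or_comm]; omega
  have hstep : ∀ t (ht : t < T),
      Lam (t + 1) = Lam t + vecMulVec (x ⟨t, ht⟩) (x ⟨t, ht⟩) := by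
    intro t ht
    rw [hLam (t + 1), hLam t, add_assoc]
    congr 1
    rw [hins t ht, Finset.sum_insert (by simp)]
    exact add_comm _ _
  have hdet : ∀ t (ht : t < T),
      (Lam (t + 1)).det = (Lam t).det * (1 + w ⟨t, ht⟩) := by
    intro t ht
    have hU : IsUnit (Lam t).det := (hPos t).det_pos.ne'.isUnit
    rw [hstep t ht, vecMulVec_eq (Fin 1), Matrix.det_add_mul _ _ hU]
    congr 1
    rw [Matrix.det_unique, ← Matrix.replicateRow_vecMul]
    simp only [Matrix.add_apply, Matrix.one_apply_eq, Matrix.replicateRow_mul_replicateCol_apply]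
    rw [← Matrix.dotProduct_mulVec]
  have hprod : ∀ t, t ≤ T → (Lam t).det = Lam0.det *
      ∏ i ∈ Finset.univ.filter (fun i : Fin T => (i : ℕ) < t), (1 + w i) := by
    intro t
    induction t with
    | zero =>
      intro _
      have : Finset.univ.filter (fun i : Fin T => (i : ℕ) < 0) = ∅ := by
        ext i; simp
      rw [hLam 0, this]
      simp
    | succ t ih =>
      intro ht'
      have ht : t < T := ht'
      rw [hdet t ht, ih ht.le, hins t ht, Finset.prod_insert (by simp)]
      ring
  have huniv : Finset.univ.filter (fun i : Fin T => (i : ℕ) < T) = Finset.univ := by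
    ext i; simp [i.isLt]
  have hdetT : (Lam T).det = Lam0.det * ∏ i, (1 + w i) := by
    rw [hprod T le_rfl, huniv]
  have hd0 : 0 < Lam0.det := hLam0.det_pos
  have h1w : ∀ i : Fin T, (0:ℝ) < 1 + w i := fun i => by linarith [hw0 i]
  have hlog : Real.log ((Lam T).det / Lam0.det) = ∑ i, Real.log (1 + w i) := by
    rw [hdetT, mul_comm, mul_div_assoc, div_self hd0.ne', mul_one,
      Real.log_prod (fun i _ => (h1w i).ne')]
  have part1 : Real.log ((Lam T).det / Lam0.det) ≤ ∑ i, w i := by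
    rw [hlog]
    refine Finset.sum_le_sum fun i _ => ?_
    have := Real.log_le_sub_one_of_pos (h1w i)
    linarith
  refine ⟨part1, fun L hL => ⟨?_, ?_⟩⟩
  · rw [hlog, Finset.mul_sum]
    exact Finset.sum_le_sum fun i _ => epl_min_le_two_log (hw0 i)
  · rcases Nat.eq_zero_or_pos d with hd | hd
    · subst hd
      simp [Matrix.det_isEmpty]
    · have hdpos : (0:ℝ) < d := by positivity
      have : Nonempty (Fin d) := Fin.pos_iff_nonempty.mp hd
      have hH := (hPos T).isHermitian
      have htre : (Lam T).trace = ∑ i, hH.eigenvalues i := epl_trace_eq_sum_eigenvalues hH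
      have htrpos : 0 < (Lam T).trace := by
        rw [htre]
        exact Finset.sum_pos (fun i _ => (hPos T).eigenvalues_pos i) Finset.univ_nonempty
      have hL2 : ∀ i : Fin T, x i ⬝ᵥ x i ≤ L ^ 2 := by
        intro i
        have h0 : 0 ≤ x i ⬝ᵥ x i := Finset.sum_nonneg fun j _ => mul_self_nonneg _
        nlinarith [Real.sq_sqrt h0, Real.sqrt_nonneg (x i ⬝ᵥ x i), hL i]
      have htr : (Lam T).trace ≤ Lam0.trace + T * L ^ 2 := by
        rw [hLam T, trace_add, trace_sum, huniv]
        have hsum : ∑ i : Fin T, (vecMulVec (x i) (x i)).trace ≤ ∑ _i : Fin T, L ^ 2 := by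
          refine Finset.sum_le_sum fun i _ => ?_
          have : (vecMulVec (x i) (x i)).trace = x i ⬝ᵥ x i := by
            simp [Matrix.trace, Matrix.diag, vecMulVec_apply, dotProduct]
          rw [this]
          exact hL2 i
        rw [Finset.sum_const, card_univ, Fintype.card_fin, nsmul_eq_mul] at hsum
        linarith
      have hldet := epl_log_det_le hd (hPos T)
      have hrpow : 0 < Lam0.det ^ ((1:ℝ)/d) := Real.rpow_pos_of_pos hd0 _
      have e2 : Real.log (Lam0.det ^ ((1:ℝ)/d)) = (1/(d:ℝ)) * Real.log Lam0.det :=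
        Real.log_rpow hd0 _
      have e1 : Real.log ((Lam T).det / Lam0.det)
          = Real.log (Lam T).det - Real.log Lam0.det :=
        Real.log_div (hPos T).det_pos.ne' hd0.ne'
      have e3 : (d:ℝ) * Real.log ((Lam T).trace / (d * Lam0.det ^ ((1:ℝ)/d)))
          = (d:ℝ) * Real.log ((Lam T).trace / d) - Real.log Lam0.det := by
        rw [Real.log_div htrpos.ne' (by positivity), Real.log_mul hdpos.ne' hrpow.ne', e2,
          Real.log_div htrpos.ne' hdpos.ne']
        field_simp
        ring
      have e4 : Real.log ((Lam T).trace / (d * Lam0.det ^ ((1:ℝ)/d)))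
          ≤ Real.log ((Lam0.trace + T * L ^ 2) / (d * Lam0.det ^ ((1:ℝ)/d))) := by
        apply Real.log_le_log (by positivity)
        gcongr
      have : Real.log ((Lam T).det / Lam0.det)
          ≤ (d:ℝ) * Real.log ((Lam0.trace + T * L ^ 2) / (d * Lam0.det ^ ((1:ℝ)/d))) := by
        rw [e1]
        calc Real.log (Lam T).det - Real.log Lam0.det
            ≤ (d:ℝ) * Real.log ((Lam T).trace / d) - Real.log Lam0.det := by linarith
          _ = (d:ℝ) * Real.log ((Lam T).trace / (d * Lam0.det ^ ((1:ℝ)/d))) := e3.symm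
          _ ≤ (d:ℝ) * Real.log ((Lam0.trace + T * L ^ 2) / (d * Lam0.det ^ ((1:ℝ)/d))) :=
            mul_le_mul_of_nonneg_left e4 hdpos.le
      linarith
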